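/- For all integers 1 ≤ i ≤ k, lim_{η → ∞} [ (1/k) · Σ_{j=k+1}^∞ P_η(j) + Σ_{j=0}^{k−i} P_η(i+j)/(i+j) ] = 1/k. Consequently, for every h ∈ [0,1], the probability h · [ (1/k) · Σ_{j=k+1}^∞ P_η(j) + Σ_{j=0}^{k−i} P_η(i+j)/(i+j) ] tends to h/k as η → ∞. -/

import Mathlib

/-- `Pcell η j` : probability that a typical Poisson–Voronoi cell contains exactly `j`
D2D helpers, with density ratio `η = λ_d / λ_m`. -/
noncomputable def Pcell (η : ℝ) (j : ℕ) : ℝ :=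
  (3.5 : ℝ) ^ (3.5 : ℝ) * Real.Gamma ((j : ℝ) + 3.5) * η ^ j /
    (Real.Gamma 3.5 * (Nat.factorial j : ℝ) * (η + 3.5) ^ ((j : ℝ) + 3.5))

open MeasureTheory Real Set Filter Topology ProbabilityTheory

lemma L1 {s r : ℝ} (hs : 0 < s) (hr : 0 < r) :
    ∫⁻ x in Set.Ici (0:ℝ), ENNReal.ofReal (x ^ (s-1) * Real.exp (-(r * x)))
      = ENNReal.ofReal (Real.Gamma s / r ^ s) := by
  have hΓ : 0 < Real.Gamma s := Real.Gamma_pos_of_pos hs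
  have hrs : 0 < r ^ s := Real.rpow_pos_of_pos hr s
  have hc : 0 < r ^ s / Real.Gamma s := div_pos hrs hΓ
  have h1 : ∫⁻ x, gammaPDF s r x = 1 := lintegral_gammaPDF_eq_one hs hr
  have hsplit : ∫⁻ x, gammaPDF s r x
      = (∫⁻ x in Iio (0:ℝ), gammaPDF s r x) + ∫⁻ x in Ici (0:ℝ), gammaPDF s r x := by
    rw [← lintegral_add_compl _ measurableSet_Iio, compl_Iio]
  have hneg : ∫⁻ x in Iio (0:ℝ), gammaPDF s r x = 0 := by
    rw [setLIntegral_congr_fun measurableSet_Iio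
      (fun x (hx : x < 0) ↦ gammaPDF_of_neg hx), lintegral_zero]
  have hpos : ∫⁻ x in Ici (0:ℝ), gammaPDF s r x
      = ENNReal.ofReal (r ^ s / Real.Gamma s)
        * ∫⁻ x in Ici (0:ℝ), ENNReal.ofReal (x ^ (s-1) * Real.exp (-(r * x))) := by
    rw [← lintegral_const_mul' _ _ ENNReal.ofReal_ne_top]
    refine setLIntegral_congr_fun measurableSet_Ici (fun x hx => ?_)
    rw [gammaPDF_of_nonneg hx, ← ENNReal.ofReal_mul hc.le, mul_assoc]
  rw [hsplit, hneg, hpos, zero_add] at h1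
  have h2 : ∫⁻ x in Ici (0:ℝ), ENNReal.ofReal (x ^ (s-1) * Real.exp (-(r * x)))
      = (ENNReal.ofReal (r ^ s / Real.Gamma s))⁻¹ := by
    rw [← one_mul ((ENNReal.ofReal (r ^ s / Real.Gamma s))⁻¹), ← h1, mul_comm,
      ← mul_assoc, ENNReal.inv_mul_cancel (by simpa using hc) ENNReal.ofReal_ne_top, one_mul]
  rw [h2, ← ENNReal.ofReal_inv_of_pos hc, inv_div]

lemma Pcell_nonneg {η : ℝ} (hη : 0 ≤ η) (j : ℕ) : 0 ≤ Pcell η j := by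
  have h1 : 0 < Real.Gamma ((j:ℝ) + 3.5) := Real.Gamma_pos_of_pos (by positivity)
  have h2 : 0 < Real.Gamma (3.5:ℝ) := Real.Gamma_pos_of_pos (by norm_num)
  unfold Pcell
  positivity

lemma Pcell_hasSum {η : ℝ} (hη : 0 < η) : HasSum (Pcell η) 1 := by
  have hη35 : (0:ℝ) < η + 3.5 := by linarith
  have hΓ : 0 < Real.Gamma (3.5:ℝ) := Real.Gamma_pos_of_pos (by norm_num)
  have hr : (0:ℝ) < (3.5:ℝ) ^ (3.5:ℝ) := Real.rpow_pos_of_pos (by norm_num) _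
  set K : ℕ → ℝ := fun j => (3.5:ℝ) ^ (3.5:ℝ) * η ^ j / (Real.Gamma 3.5 * (Nat.factorial j : ℝ))
    with hK
  have hKnn : ∀ j, 0 ≤ K j := fun j => by
    have : (0:ℝ) < (Nat.factorial j : ℝ) := by positivity
    positivity
  -- each Pcell as an integral
  have step1 : ∀ j : ℕ, ENNReal.ofReal (Pcell η j) =
      ∫⁻ x in Set.Ici (0:ℝ),
        ENNReal.ofReal (K j * (x ^ (((j:ℝ) + 3.5) - 1) * Real.exp (-((η + 3.5) * x)))) := by
    intro j
    have hint := L1 (s := (j:ℝ) + 3.5) (r := η + 3.5) (by positivity) hη35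
    have : ENNReal.ofReal (Pcell η j) = ENNReal.ofReal (K j) *
        ENNReal.ofReal (Real.Gamma ((j:ℝ) + 3.5) / (η + 3.5) ^ ((j:ℝ) + 3.5)) := by
      rw [← ENNReal.ofReal_mul (hKnn j)]
      congr 1
      unfold Pcell
      rw [hK]; ring
    rw [this, ← hint, ← lintegral_const_mul' _ _ ENNReal.ofReal_ne_top]
    refine setLIntegral_congr_fun measurableSet_Ici (fun x hx => ?_)
    rw [← ENNReal.ofReal_mul (hKnn j)]
  -- sum of integrals
  have hmeas : ∀ j : ℕ, AEMeasurable (fun x : ℝ =>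
      ENNReal.ofReal (K j * (x ^ (((j:ℝ) + 3.5) - 1) * Real.exp (-((η + 3.5) * x)))))
      (volume.restrict (Set.Ici (0:ℝ))) := by
    intro j
    apply Measurable.aemeasurable
    apply Measurable.ennreal_ofReal
    fun_prop
  have step2 : ∑' j : ℕ, ENNReal.ofReal (Pcell η j) =
      ∫⁻ x in Set.Ici (0:ℝ), ∑' j : ℕ,
        ENNReal.ofReal (K j * (x ^ (((j:ℝ) + 3.5) - 1) * Real.exp (-((η + 3.5) * x)))) := by
    simp_rw [step1]
    exact (lintegral_tsum hmeas).symm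
  -- pointwise evaluation of the tsum
  have step3 : ∀ x : ℝ, 0 ≤ x → (∑' j : ℕ,
      ENNReal.ofReal (K j * (x ^ (((j:ℝ) + 3.5) - 1) * Real.exp (-((η + 3.5) * x)))))
      = ENNReal.ofReal ((3.5:ℝ) ^ (3.5:ℝ) / Real.Gamma 3.5
          * (x ^ ((3.5:ℝ) - 1) * Real.exp (-(3.5 * x)))) := by
    intro x hx
    have hC : (0:ℝ) ≤ (3.5:ℝ) ^ (3.5:ℝ) / Real.Gamma 3.5
        * (x ^ ((3.5:ℝ) - 1) * Real.exp (-(3.5 * x))) := by positivity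
    have hterm : ∀ j : ℕ, K j * (x ^ (((j:ℝ) + 3.5) - 1) * Real.exp (-((η + 3.5) * x)))
        = ((3.5:ℝ) ^ (3.5:ℝ) / Real.Gamma 3.5
            * (x ^ ((3.5:ℝ) - 1) * Real.exp (-(3.5 * x))))
          * ((η * x) ^ j / (Nat.factorial j : ℝ) * Real.exp (-(η * x))) := by
      intro j
      have hpow : x ^ (((j:ℝ) + 3.5) - 1) = x ^ j * x ^ ((3.5:ℝ) - 1) := by
        rcases eq_or_lt_of_le hx with h | h
        · rw [← h]
          rw [Real.zero_rpow (ne_of_gt (by have : (0:ℝ) ≤ (j:ℝ) := Nat.cast_nonneg j; linarith)),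
            Real.zero_rpow (by norm_num)]
          ring
        · rw [show ((j:ℝ) + 3.5) - 1 = (j:ℝ) + ((3.5:ℝ) - 1) by ring,
            Real.rpow_add h, Real.rpow_natCast]
      have hexp : Real.exp (-((η + 3.5) * x)) = Real.exp (-(3.5 * x)) * Real.exp (-(η * x)) := by
        rw [← Real.exp_add]; ring_nf
      rw [hpow, hexp, hK, mul_pow]
      field_simp
    simp_rw [hterm]
    have hsum : Summable (fun j : ℕ => (η * x) ^ j / (Nat.factorial j : ℝ)) :=
      Real.summable_pow_div_factorial (η * x)
    have hnn : ∀ j : ℕ, (0:ℝ) ≤ (η * x) ^ j / (Nat.factorial j : ℝ) := fun j => by positivity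
    have htexp : (∑' j : ℕ, (η * x) ^ j / (Nat.factorial j : ℝ)) = Real.exp (η * x) := by
      rw [Real.exp_eq_exp_ℝ, NormedSpace.exp_eq_tsum_div]
    calc ∑' j : ℕ, ENNReal.ofReal (((3.5:ℝ) ^ (3.5:ℝ) / Real.Gamma 3.5
            * (x ^ ((3.5:ℝ) - 1) * Real.exp (-(3.5 * x))))
          * ((η * x) ^ j / (Nat.factorial j : ℝ) * Real.exp (-(η * x))))
        = ENNReal.ofReal ((3.5:ℝ) ^ (3.5:ℝ) / Real.Gamma 3.5
            * (x ^ ((3.5:ℝ) - 1) * Real.exp (-(3.5 * x))))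
          * ∑' j : ℕ, (ENNReal.ofReal ((η * x) ^ j / (Nat.factorial j : ℝ))
              * ENNReal.ofReal (Real.exp (-(η * x)))) := by
          simp_rw [ENNReal.ofReal_mul hC, ENNReal.ofReal_mul (hnn _)]
          rw [ENNReal.tsum_mul_left]
      _ = ENNReal.ofReal ((3.5:ℝ) ^ (3.5:ℝ) / Real.Gamma 3.5
            * (x ^ ((3.5:ℝ) - 1) * Real.exp (-(3.5 * x)))) := by
          rw [ENNReal.tsum_mul_right, ← ENNReal.ofReal_tsum_of_nonneg hnn hsum, htexp,
            ← ENNReal.ofReal_mul (Real.exp_nonneg _), ← Real.exp_add]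
          simp
  -- put it together
  have step4 : ∑' j : ℕ, ENNReal.ofReal (Pcell η j) = 1 := by
    rw [step2, setLIntegral_congr_fun measurableSet_Ici (fun x hx => step3 x hx)]
    simp_rw [ENNReal.ofReal_mul (le_of_lt (div_pos hr hΓ))]
    rw [lintegral_const_mul' _ _ ENNReal.ofReal_ne_top,
      L1 (s := (3.5:ℝ)) (r := (3.5:ℝ)) (by norm_num) (by norm_num),
      ← ENNReal.ofReal_mul (le_of_lt (div_pos hr hΓ)),
      show (3.5:ℝ) ^ (3.5:ℝ) / Real.Gamma 3.5 * (Real.Gamma 3.5 / (3.5:ℝ) ^ (3.5:ℝ)) = 1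
        from by field_simp, ENNReal.ofReal_one]
  -- back to ℝ
  have hsummable : Summable (Pcell η) := by
    have := ENNReal.summable_toReal (f := fun j => ENNReal.ofReal (Pcell η j))
      (by rw [step4]; exact ENNReal.one_ne_top)
    refine this.congr (fun j => ?_)
    exact ENNReal.toReal_ofReal (Pcell_nonneg hη.le j)
  have htsum : ∑' j : ℕ, Pcell η j = 1 := by
    have h := ENNReal.tsum_toReal_eq (f := fun j => ENNReal.ofReal (Pcell η j))
      (fun _ => ENNReal.ofReal_ne_top)
    rw [step4] at h
    simp only [ENNReal.toReal_one] at h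
    rw [tsum_congr (fun j => (ENNReal.toReal_ofReal (Pcell_nonneg hη.le j)).symm)]
    exact h.symm
  rw [← htsum]
  exact hsummable.hasSum

lemma Pcell_tendsto_zero (j : ℕ) : Tendsto (fun η : ℝ => Pcell η j) atTop (𝓝 0) := by
  set A : ℝ := (3.5:ℝ) ^ (3.5:ℝ) * Real.Gamma ((j:ℝ) + 3.5) with hA
  set B : ℝ := Real.Gamma 3.5 * (Nat.factorial j : ℝ) with hB
  have hApos : 0 < A := mul_pos (Real.rpow_pos_of_pos (by norm_num) _)
    (Real.Gamma_pos_of_pos (by positivity))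
  have hBpos : 0 < B := mul_pos (Real.Gamma_pos_of_pos (by norm_num)) (by positivity)
  have key : ∀ η : ℝ, 0 ≤ η → Pcell η j
      = A / B * (η / (η + 3.5)) ^ j * ((η + 3.5) ^ ((3.5:ℝ)))⁻¹ := by
    intro η hη
    have hpos : (0:ℝ) < η + 3.5 := by linarith
    unfold Pcell
    rw [show ((j:ℝ) + 3.5 : ℝ) = ((j:ℕ) : ℝ) + (3.5:ℝ) from rfl,
      Real.rpow_add hpos, Real.rpow_natCast, div_pow, hA, hB]
    have h1 : (η + 3.5 : ℝ) ^ j ≠ 0 := pow_ne_zero _ (ne_of_gt hpos)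
    have h2 : ((η + 3.5 : ℝ) ^ ((3.5:ℝ))) ≠ 0 := ne_of_gt (Real.rpow_pos_of_pos hpos _)
    have h3 : Real.Gamma (3.5:ℝ) ≠ 0 := ne_of_gt (Real.Gamma_pos_of_pos (by norm_num))
    have h4 : ((Nat.factorial j : ℝ)) ≠ 0 := by positivity
    field_simp
  have hg : Tendsto (fun η : ℝ => A / B * ((η + 3.5) ^ ((3.5:ℝ)))⁻¹) atTop (𝓝 0) := by
    have h1 : Tendsto (fun η : ℝ => (η + 3.5) ^ ((3.5:ℝ))) atTop atTop :=
      (tendsto_rpow_atTop (by norm_num)).comp (tendsto_atTop_add_const_right _ 3.5 tendsto_id)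
    simpa using (h1.inv_tendsto_atTop).const_mul (A / B)
  apply squeeze_zero' (g := fun η : ℝ => A / B * ((η + 3.5) ^ ((3.5:ℝ)))⁻¹)
  · filter_upwards [eventually_ge_atTop (0:ℝ)] with η hη
    exact Pcell_nonneg hη j
  · filter_upwards [eventually_ge_atTop (0:ℝ)] with η hη
    rw [key η hη]
    have hpos : (0:ℝ) < η + 3.5 := by linarith
    have h1 : (η / (η + 3.5)) ^ j ≤ 1 :=
      pow_le_one₀ (by positivity) (by rw [div_le_one hpos]; linarith)
    have h2 : (0:ℝ) ≤ ((η + 3.5) ^ ((3.5:ℝ)))⁻¹ := by positivity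
    calc A / B * (η / (η + 3.5)) ^ j * ((η + 3.5) ^ ((3.5:ℝ)))⁻¹
        ≤ A / B * 1 * ((η + 3.5) ^ ((3.5:ℝ)))⁻¹ := by
          apply mul_le_mul_of_nonneg_right _ h2
          exact mul_le_mul_of_nonneg_left h1 (by positivity)
      _ = A / B * ((η + 3.5) ^ ((3.5:ℝ)))⁻¹ := by ring
  · exact hg

theorem stmt_5 (i k : ℕ) (hi : 1 ≤ i) (hik : i ≤ k) :
    Filter.Tendsto
      (fun η : ℝ =>
        (1 / (k : ℝ)) * (∑' j : ℕ, Pcell η (j + (k + 1))) +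
          ∑ j ∈ Finset.range (k - i + 1), Pcell η (i + j) / ((i + j : ℕ) : ℝ))
      Filter.atTop (nhds (1 / (k : ℝ))) ∧
    ∀ h : ℝ, 0 ≤ h → h ≤ 1 →
      Filter.Tendsto
        (fun η : ℝ =>
          h * ((1 / (k : ℝ)) * (∑' j : ℕ, Pcell η (j + (k + 1))) +
            ∑ j ∈ Finset.range (k - i + 1), Pcell η (i + j) / ((i + j : ℕ) : ℝ)))
        Filter.atTop (nhds (h / (k : ℝ))) := by
  have hT : Tendsto (fun η : ℝ => ∑' j : ℕ, Pcell η (j + (k + 1))) atTop (𝓝 1) := by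
    have hpart : Tendsto (fun η : ℝ => ∑ j ∈ Finset.range (k + 1), Pcell η j) atTop (𝓝 0) := by
      have := tendsto_finset_sum (Finset.range (k + 1))
        (fun j _ => Pcell_tendsto_zero j)
      simpa using this
    have hlim : Tendsto (fun η : ℝ => 1 - ∑ j ∈ Finset.range (k + 1), Pcell η j)
        atTop (𝓝 1) := by
      simpa using (tendsto_const_nhds (x := (1:ℝ)) (f := atTop)).sub hpart
    apply hlim.congr'
    filter_upwards [eventually_gt_atTop (0:ℝ)] with η hη
    have hs := (Pcell_hasSum hη).summable
    have h1 := hs.sum_add_tsum_nat_add (k + 1)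
    have h2 := (Pcell_hasSum hη).tsum_eq
    rw [h2] at h1
    linarith
  have hS : Tendsto (fun η : ℝ =>
      ∑ j ∈ Finset.range (k - i + 1), Pcell η (i + j) / ((i + j : ℕ) : ℝ)) atTop (𝓝 0) := by
    have := tendsto_finset_sum (Finset.range (k - i + 1))
      (fun j _ => (Pcell_tendsto_zero (i + j)).div_const (((i + j : ℕ) : ℝ)))
    simpa using this
  have main : Tendsto (fun η : ℝ =>
      (1 / (k : ℝ)) * (∑' j : ℕ, Pcell η (j + (k + 1))) +
        ∑ j ∈ Finset.range (k - i + 1), Pcell η (i + j) / ((i + j : ℕ) : ℝ))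
      atTop (𝓝 (1 / (k : ℝ))) := by
    simpa using (hT.const_mul (1 / (k : ℝ))).add hS
  exact ⟨main, fun h _ _ => by simpa [mul_one_div, div_eq_mul_inv] using main.const_mul h⟩
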